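/- Let A and B be C*-algebras with A unital, and φ : M₂(A) → B an arbitrary function. Then φ is a *-homomorphism if and only if φ is a *-semigroup homomorphism (i.e. φ(xy) = φ(x)φ(y) and φ(x*) = φ(x)* for all x, y ∈ M₂(A)) satisfying φ(i·1) = i·φ(e₁₁) + i·φ(e₂₂). -/

import Mathlib

open Matrix

namespace Stmt4Aux

variable {A B : Type*} [CStarAlgebra A] [NonUnitalCStarAlgebra B]

lemma corner (x : Matrix (Fin 2) (Fin 2) A) (i j : Fin 2) :
    single i i (1 : A) * x * single j j (1 : A)
      = single i j (x i j) := by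
  ext a b
  fin_cases i <;> fin_cases j <;> fin_cases a <;> fin_cases b <;>
    simp [Matrix.mul_apply, Fin.sum_univ_two, single]


lemma one_eq {A : Type*} [CStarAlgebra A] : (1 : Matrix (Fin 2) (Fin 2) A)
    = single 0 0 (1 : A) + single 1 1 (1 : A) := by
  ext i j
  fin_cases i <;> fin_cases j <;>
    simp [single, Matrix.one_apply]

set_option maxHeartbeats 1000000 in
lemma backward (φ : Matrix (Fin 2) (Fin 2) A → B)
    (hm : ∀ x y, φ (x * y) = φ x * φ y) (hs : ∀ x, φ (star x) = star (φ x))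
    (hI : φ (Complex.I • (1 : Matrix (Fin 2) (Fin 2) A)) =
          Complex.I • φ (Matrix.single 0 0 (1 : A)) +
          Complex.I • φ (Matrix.single 1 1 (1 : A))) :
    (∀ x y, φ (x + y) = φ x + φ y) ∧ (∀ (c : ℂ) (x), φ (c • x) = c • φ x) := by
  set p0 := φ (single 0 0 (1 : A)) with hp0def
  set p1 := φ (single 1 1 (1 : A)) with hp1def
  set w := φ (Complex.I • (1 : Matrix (Fin 2) (Fin 2) A)) with hwdef
  -- step 1 : φ 0 = 0
  have hzl : ∀ x, φ 0 * φ x = φ 0 := by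
    intro x
    rw [← hm, zero_mul]
  have h1 : (1 : Matrix (Fin 2) (Fin 2) A) =
      (Complex.I • 1 * (Complex.I • 1)) * (Complex.I • 1 * (Complex.I • 1)) := by
    rw [smul_mul_smul_comm, Complex.I_mul_I, one_mul, smul_mul_smul_comm, neg_one_mul,
      neg_neg, one_smul, one_mul]
  have hφ1 : φ 1 = (w * w) * (w * w) := by
    conv_lhs => rw [h1]
    rw [hm, hm]
  have hz00 : φ 0 * p0 = φ 0 := by
    rw [hp0def, hzl]
  have hz11 : φ 0 * p1 = φ 0 := by
    rw [hp1def, hzl]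
  have hzw : ∀ c : ℂ, (c • φ 0) * w = (c * (2 * Complex.I)) • φ 0 := by
    intro c
    rw [hI, mul_add, mul_smul_comm, mul_smul_comm, smul_mul_assoc, smul_mul_assoc, smul_smul, smul_smul,
      hz00, hz11, ← add_smul,
      show Complex.I * c + Complex.I * c = c * (2 * Complex.I) from by ring]
  have h16 : φ 0 = (16 : ℂ) • φ 0 := by
    have assoc : φ 0 * ((w * w) * (w * w)) = ((((((1:ℂ) • φ 0) * w) * w) * w) * w) := by
      rw [one_smul]; noncomm_ring
    have step : ((((((1:ℂ) • φ 0) * w) * w) * w) * w)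
        = ((1 : ℂ) * (2*Complex.I) * (2*Complex.I) * (2*Complex.I) * (2*Complex.I)) • φ 0 := by
      rw [hzw, hzw, hzw, hzw]
    conv_lhs => rw [← hzl 1]
    rw [hφ1, assoc, step]
    congr 1
    have h2 : Complex.I * Complex.I = -1 := Complex.I_mul_I
    linear_combination (16 * (Complex.I ^ 2 - 1)) * h2
  have hz0 : φ 0 = 0 := by
    have h15 : (15 : ℂ) • φ 0 = 0 := by
      calc (15:ℂ) • φ 0 = (16:ℂ) • φ 0 - (1:ℂ) • φ 0 := by rw [← sub_smul]; norm_num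
      _ = φ 0 - φ 0 := by rw [← h16, one_smul]
      _ = 0 := sub_self _
    have h := congrArg (fun x : B => (15:ℂ)⁻¹ • x) h15
    simp only [smul_smul, smul_zero] at h
    norm_num at h
    exact h
  -- step 2 : matrix unit relations
  have hp00 : p0 * p0 = p0 := by
    rw [hp0def, ← hm, single_mul_single_same, mul_one]
  have hp11 : p1 * p1 = p1 := by
    rw [hp1def, ← hm, single_mul_single_same, mul_one]
  have hp01 : p0 * p1 = 0 := by
    rw [hp0def, hp1def, ← hm, single_mul_single_of_ne (h := by decide), hz0]
  have hp10 : p1 * p0 = 0 := by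
    rw [hp0def, hp1def, ← hm, single_mul_single_of_ne (h := by decide), hz0]
  have hss : (p0 + p1) * (p0 + p1) = p0 + p1 := by
    rw [add_mul, mul_add, mul_add, hp00, hp01, hp10, hp11]
    abel
  have hw' : w = Complex.I • (p0 + p1) := by
    rw [hI, smul_add]
  have hww : w * w = -(p0 + p1) := by
    rw [hw', smul_mul_smul_comm, Complex.I_mul_I, hss, neg_smul, one_smul]
  have hphi1 : φ 1 = p0 + p1 := by
    rw [hφ1, hww, neg_mul_neg, hss]
  have h1l : ∀ x, φ 1 * φ x = φ x := by
    intro x; rw [← hm, one_mul]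
  have h1r : ∀ x, φ x * φ 1 = φ x := by
    intro x; rw [← hm, mul_one]
  -- step 3 : corner additivity
  have offdiag : ∀ (i j : Fin 2), i ≠ j → ∀ a b : A,
      φ (single i j (a + b)) = φ (single i j a) + φ (single i j b) := by
    intro i j hij a b
    have hcase : (i = 0 ∧ j = 1) ∨ (i = 1 ∧ j = 0) := by
      revert hij; revert j; revert i; decide
    have hsum : φ (single i i (1:A)) + φ (single j j (1:A)) = φ 1 := by
      rcases hcase with ⟨hi, hj⟩ | ⟨hi, hj⟩ <;> subst hi <;> subst hj <;>
        rw [hphi1, ← hp0def, ← hp1def]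
      exact add_comm _ _
    have mA : (single i i a + single i j b) * single i i (1:A)
        = single i i a := by
      rw [add_mul, single_mul_single_same, single_mul_single_of_ne (h := hij.symm), mul_one, add_zero]
    have mB : (single i i a + single i j b) * single j j (1:A)
        = single i j b := by
      rw [add_mul, single_mul_single_same, single_mul_single_of_ne (h := hij), mul_one, zero_add]
    have mC : (single i i a + single i j b)
        * (single i j (1:A) + single j j (1:A)) = single i j (a + b) := by
      rw [mul_add, add_mul, add_mul, single_mul_single_same, single_mul_single_same,
        single_mul_single_of_ne (h := hij.symm), single_mul_single_of_ne (h := hij), mul_one, mul_one,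
        add_zero, zero_add, ← single_add]
    have mD : single i i a * (single i j (1:A) + single j j (1:A))
        = single i j a := by
      rw [mul_add, single_mul_single_same, single_mul_single_of_ne (h := hij), mul_one, add_zero]
    have mE : single i j b * (single i j (1:A) + single j j (1:A))
        = single i j b := by
      rw [mul_add, single_mul_single_same, single_mul_single_of_ne (h := hij.symm), mul_one, zero_add]
    have hu : φ (single i i a + single i j b)
        = φ (single i i a) + φ (single i j b) := by
      have h := h1r (single i i a + single i j b)
      rw [← hsum, mul_add, ← hm, ← hm, mA, mB] at h
      exact h.symm
    calc φ (single i j (a + b))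
        = φ ((single i i a + single i j b)
            * (single i j (1:A) + single j j (1:A))) := by rw [mC]
      _ = (φ (single i i a) + φ (single i j b))
            * φ (single i j (1:A) + single j j (1:A)) := by rw [hm, hu]
      _ = φ (single i i a)
            * φ (single i j (1:A) + single j j (1:A))
          + φ (single i j b)
            * φ (single i j (1:A) + single j j (1:A)) := add_mul _ _ _
      _ = φ (single i j a) + φ (single i j b) := by
            rw [← hm, ← hm, mD, mE]
  have corner_add : ∀ (i j : Fin 2) (a b : A),
      φ (single i j (a + b)) = φ (single i j a) + φ (single i j b) := by
    intro i j a b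
    by_cases h : i = j
    · subst h
      have hcase : i = 0 ∨ i = 1 := by revert i; decide
      have key : ∀ (j : Fin 2) (_ : i ≠ j) (c : A),
          φ (single i i c) = φ (single i j c) * φ (single j i 1) := by
        intro j hij c
        rw [← hm, single_mul_single_same, mul_one]
      rcases hcase with hi | hi <;> subst hi
      · rw [key 1 (by decide) (a + b), key 1 (by decide) a, key 1 (by decide) b,
          offdiag 0 1 (by decide), add_mul]
      · rw [key 0 (by decide) (a + b), key 0 (by decide) a, key 0 (by decide) b,
          offdiag 1 0 (by decide), add_mul]
    · exact offdiag i j h a b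
  -- step 4 : decomposition and additivity
  have key : ∀ (x : Matrix (Fin 2) (Fin 2) A) (i j : Fin 2),
      φ (single i i (1:A)) * φ x * φ (single j j (1:A))
        = φ (single i j (x i j)) := by
    intro x i j
    rw [← hm, ← hm, corner]
  have decomp : ∀ x : Matrix (Fin 2) (Fin 2) A,
      φ x = φ (single 0 0 (x 0 0)) + φ (single 0 1 (x 0 1))
          + φ (single 1 0 (x 1 0)) + φ (single 1 1 (x 1 1)) := by
    intro x
    have e1 : φ x = (φ 1 * φ x) * φ 1 := by rw [h1l, h1r]
    rw [hphi1] at e1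
    calc φ x = (p0 + p1) * φ x * (p0 + p1) := e1
      _ = p0 * φ x * p0 + p0 * φ x * p1 + (p1 * φ x * p0 + p1 * φ x * p1) := by
          rw [add_mul, add_mul, mul_add, mul_add]
      _ = φ (single 0 0 (x 0 0)) + φ (single 0 1 (x 0 1))
          + (φ (single 1 0 (x 1 0)) + φ (single 1 1 (x 1 1))) := by
          rw [hp0def, hp1def, key x 0 0, key x 0 1, key x 1 0, key x 1 1]
      _ = _ := by abel
  have hadd : ∀ x y, φ (x + y) = φ x + φ y := by
    intro x y
    rw [decomp (x + y), decomp x, decomp y]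
    simp only [Matrix.add_apply]
    rw [corner_add, corner_add, corner_add, corner_add]
    abel
  refine ⟨hadd, ?_⟩
  -- negation
  have hneg : ∀ x, φ (-x) = -φ x := by
    intro x
    have h := hadd x (-x)
    rw [add_neg_cancel, hz0] at h
    exact eq_neg_of_add_eq_zero_right h.symm
  have hImul : w = Complex.I • φ 1 := by rw [hw', hphi1]
  -- real one-parameter semigroup
  have rho_add : ∀ s t : ℝ, φ (((s + t : ℝ) : ℂ) • (1 : Matrix (Fin 2) (Fin 2) A))
      = φ ((s : ℂ) • 1) + φ ((t : ℂ) • 1) := by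
    intro s t
    rw [show (((s + t : ℝ) : ℂ)) = (s : ℂ) + (t : ℂ) from by push_cast; ring, add_smul, hadd]
  have rho_mul : ∀ s t : ℝ, φ ((s : ℂ) • (1 : Matrix (Fin 2) (Fin 2) A)) * φ ((t : ℂ) • 1)
      = φ (((s * t : ℝ) : ℂ) • 1) := by
    intro s t
    rw [← hm, smul_mul_smul_comm, one_mul]
    norm_cast
  have rho_sa : ∀ t : ℝ, star (φ ((t : ℂ) • (1 : Matrix (Fin 2) (Fin 2) A))) = φ ((t : ℂ) • 1) := by
    intro t
    rw [← hs]
    congr 1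
    rw [star_smul, star_one, Complex.star_def, Complex.conj_ofReal]
  have rho_zero : φ (((0 : ℝ) : ℂ) • (1 : Matrix (Fin 2) (Fin 2) A)) = 0 := by
    rw [show (((0:ℝ):ℂ)) = (0:ℂ) from by norm_num, zero_smul, hz0]
  have rho_nonneg : ∀ t : ℝ, 0 ≤ t →
      (0 : Unitization ℂ B) ≤ (φ ((t : ℂ) • (1 : Matrix (Fin 2) (Fin 2) A)) : Unitization ℂ B) := by
    intro t ht
    have h1 : φ ((t : ℂ) • (1 : Matrix (Fin 2) (Fin 2) A))
        = φ ((Real.sqrt t : ℂ) • 1) * φ ((Real.sqrt t : ℂ) • 1) := by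
      rw [rho_mul, Real.mul_self_sqrt ht]
    rw [h1, Unitization.inr_mul]
    have hsa : (φ ((Real.sqrt t : ℂ) • (1 : Matrix (Fin 2) (Fin 2) A)) : Unitization ℂ B)
        = star ((φ ((Real.sqrt t : ℂ) • (1 : Matrix (Fin 2) (Fin 2) A)) : Unitization ℂ B)) := by
      rw [← Unitization.inr_star]
      exact congrArg (fun b : B => (b : Unitization ℂ B)) (rho_sa _).symm
    nth_rewrite 1 [hsa]
    exact star_mul_self_nonneg _
  have rho_nat : ∀ (n : ℕ) (t : ℝ), φ ((((n : ℝ) * t : ℝ) : ℂ) • (1 : Matrix (Fin 2) (Fin 2) A))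
      = n • φ ((t : ℂ) • 1) := by
    intro n t
    induction n with
    | zero => simpa using rho_zero
    | succ n ih =>
        rw [show (((n : ℕ) + 1 : ℕ) : ℝ) * t = (n : ℝ) * t + t from by push_cast; ring,
          rho_add, ih, succ_nsmul]
  have rho_div : ∀ (k n : ℕ), 0 < n →
      φ ((((k : ℝ) / (n : ℝ) : ℝ) : ℂ) • (1 : Matrix (Fin 2) (Fin 2) A))
        = ((k : ℝ) / (n : ℝ)) • φ 1 := by
    intro k n hn
    have hn' : ((n : ℝ)) ≠ 0 := Nat.cast_ne_zero.mpr hn.ne'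
    have h2 := rho_nat n ((k : ℝ) / (n : ℝ))
    rw [show (n : ℝ) * ((k : ℝ) / (n : ℝ)) = (k : ℝ) * 1 from by field_simp] at h2
    rw [rho_nat k 1] at h2
    rw [show (((1 : ℝ) : ℂ)) = (1 : ℂ) from by norm_num, one_smul] at h2
    rw [← Nat.cast_smul_eq_nsmul ℝ, ← Nat.cast_smul_eq_nsmul ℝ] at h2
    have h3 := congrArg (fun y : B => ((n : ℝ))⁻¹ • y) h2
    simp only [smul_smul, inv_mul_cancel₀ hn', one_smul] at h3
    rw [← h3, div_eq_inv_mul, mul_comm]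
  -- the squeeze : φ (t • 1) = t • φ 1 for t ≥ 0
  have rho_eq : ∀ t : ℝ, 0 ≤ t →
      φ ((t : ℂ) • (1 : Matrix (Fin 2) (Fin 2) A)) = t • φ 1 := by
    intro t ht
    have bound : ∀ n : ℕ, 0 < n →
        ‖φ ((t : ℂ) • (1 : Matrix (Fin 2) (Fin 2) A)) - t • φ 1‖ ≤ 2 * ‖φ 1‖ / n := by
      intro n hn
      have hn' : (0 : ℝ) < (n : ℝ) := Nat.cast_pos.mpr hn
      set k : ℕ := ⌊(n : ℝ) * t⌋₊ with hk
      have hq1 : (k : ℝ) / n ≤ t := by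
        rw [div_le_iff₀ hn']
        have := Nat.floor_le (by positivity : (0 : ℝ) ≤ (n : ℝ) * t)
        rw [← hk] at this
        linarith
      have hq2 : t ≤ ((k : ℝ) + 1) / n := by
        rw [le_div_iff₀ hn']
        have := (Nat.lt_floor_add_one ((n : ℝ) * t)).le
        rw [← hk] at this
        linarith
      have hd1 : 0 ≤ t - (k : ℝ) / n := by linarith
      have hd2 : t - (k : ℝ) / n ≤ 1 / n := by
        have he : ((k : ℝ) + 1) / n = (k : ℝ) / n + 1 / n := by ring
        rw [he] at hq2
        linarith
      have split : φ ((t : ℂ) • (1 : Matrix (Fin 2) (Fin 2) A))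
          = ((k : ℝ) / n) • φ 1 + φ (((t - (k : ℝ) / n : ℝ) : ℂ) • 1) := by
        have := rho_add ((k : ℝ) / n) (t - (k : ℝ) / n)
        rw [show ((k : ℝ) / n + (t - (k : ℝ) / n) : ℝ) = t from by ring] at this
        rw [this, rho_div k n hn]
      have hmono : (φ (((t - (k : ℝ) / n : ℝ) : ℂ) • (1 : Matrix (Fin 2) (Fin 2) A)) : Unitization ℂ B)
          ≤ (φ (((1 / n : ℝ) : ℂ) • (1 : Matrix (Fin 2) (Fin 2) A)) : Unitization ℂ B) := by
        have hsplit2 := rho_add (t - (k : ℝ) / n) (1 / n - (t - (k : ℝ) / n))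
        rw [show ((t - (k : ℝ) / n) + (1 / n - (t - (k : ℝ) / n)) : ℝ) = (1 / n : ℝ) from by ring]
          at hsplit2
        rw [hsplit2, Unitization.inr_add]
        exact le_add_of_nonneg_right (rho_nonneg _ (by linarith))
      have hnorm : ‖φ (((t - (k : ℝ) / n : ℝ) : ℂ) • (1 : Matrix (Fin 2) (Fin 2) A))‖
          ≤ 1 / n * ‖φ 1‖ := by
        have h0 := rho_nonneg _ hd1
        have := CStarAlgebra.norm_le_norm_of_nonneg_of_le h0 hmono
        rw [Unitization.norm_inr, Unitization.norm_inr] at this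
        have e1 : φ (((1 / n : ℝ) : ℂ) • (1 : Matrix (Fin 2) (Fin 2) A)) = (1 / (n:ℝ)) • φ 1 := by
          have := rho_div 1 n hn
          rw [Nat.cast_one] at this
          exact this
        rw [e1, norm_smul] at this
        calc ‖φ (((t - (k : ℝ) / n : ℝ) : ℂ) • (1 : Matrix (Fin 2) (Fin 2) A))‖
            ≤ ‖(1 / (n:ℝ))‖ * ‖φ 1‖ := this
          _ = 1 / n * ‖φ 1‖ := by
              rw [Real.norm_eq_abs, abs_of_nonneg (by positivity)]
      calc ‖φ ((t : ℂ) • (1 : Matrix (Fin 2) (Fin 2) A)) - t • φ 1‖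
          = ‖φ (((t - (k : ℝ) / n : ℝ) : ℂ) • 1) - (t - (k : ℝ) / n) • φ 1‖ := by
            rw [split, sub_smul]
            congr 1
            abel
        _ ≤ ‖φ (((t - (k : ℝ) / n : ℝ) : ℂ) • (1 : Matrix (Fin 2) (Fin 2) A))‖
              + ‖(t - (k : ℝ) / n) • φ 1‖ := norm_sub_le _ _
        _ ≤ 1 / n * ‖φ 1‖ + 1 / n * ‖φ 1‖ := by
            refine add_le_add hnorm ?_
            rw [norm_smul, Real.norm_eq_abs, abs_of_nonneg hd1]
            have hp : (0:ℝ) ≤ ‖φ 1‖ := norm_nonneg _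
            nlinarith
        _ = 2 * ‖φ 1‖ / n := by ring
    have hzero : ‖φ ((t : ℂ) • (1 : Matrix (Fin 2) (Fin 2) A)) - t • φ 1‖ ≤ 0 := by
      refine le_of_forall_pos_le_add fun ε hε => ?_
      obtain ⟨n, hnb⟩ := exists_nat_gt (2 * ‖φ 1‖ / ε)
      have hn : 0 < n + 1 := Nat.succ_pos n
      have hnb' : 2 * ‖φ 1‖ / ε < ((n + 1 : ℕ) : ℝ) := by push_cast; linarith
      have h1 : 2 * ‖φ 1‖ / ((n + 1 : ℕ) : ℝ) ≤ ε := by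
        rw [div_le_iff₀ (by positivity)]
        rw [div_lt_iff₀ hε] at hnb'
        nlinarith
      calc ‖φ ((t : ℂ) • (1 : Matrix (Fin 2) (Fin 2) A)) - t • φ 1‖
          ≤ 2 * ‖φ 1‖ / ((n + 1 : ℕ) : ℝ) := bound (n + 1) hn
        _ ≤ ε := h1
        _ = 0 + ε := (zero_add ε).symm
    have := norm_le_zero_iff.mp hzero
    exact sub_eq_zero.mp this
  -- all real scalars
  have hreal : ∀ t : ℝ, φ ((t : ℂ) • (1 : Matrix (Fin 2) (Fin 2) A)) = (t : ℂ) • φ 1 := by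
    intro t
    rcases le_or_gt 0 t with h | h
    · rw [rho_eq t h, Complex.coe_smul]
    · have h0 := rho_add t (-t)
      rw [show (t + -t : ℝ) = (0:ℝ) from by ring, rho_zero] at h0
      have h1 : φ ((t : ℂ) • (1 : Matrix (Fin 2) (Fin 2) A)) = - φ (((-t : ℝ) : ℂ) • 1) :=
        eq_neg_of_add_eq_zero_left h0.symm
      rw [h1, rho_eq (-t) (by linarith), Complex.coe_smul, ← neg_smul]
      norm_num
  -- all complex scalars on 1
  have hc1 : ∀ c : ℂ, φ (c • (1 : Matrix (Fin 2) (Fin 2) A)) = c • φ 1 := by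
    intro c
    have hdec : c • (1 : Matrix (Fin 2) (Fin 2) A)
        = (c.re : ℂ) • 1 + ((c.im : ℂ) • 1) * (Complex.I • 1) := by
      rw [smul_mul_smul_comm, one_mul, ← add_smul]
      congr 1
      rw [Complex.re_add_im]
    have hp2 : φ 1 * φ 1 = φ 1 := by rw [← hm, one_mul]
    rw [hdec, hadd, hm, hreal, hreal, ← hwdef, hImul, smul_mul_smul_comm, hp2, ← add_smul,
      Complex.re_add_im]
  -- conclude
  intro c x
  have hx : c • x = (c • (1 : Matrix (Fin 2) (Fin 2) A)) * x := by
    rw [smul_mul_assoc, one_mul]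
  rw [hx, hm, hc1, smul_mul_assoc, h1l]

end Stmt4Aux

/-- Let `A` and `B` be C*-algebras with `A` unital, and
`φ : M₂(A) → B` an arbitrary function.  Then `φ` is a `*`-homomorphism
(ℂ-linear, multiplicative and involution-preserving) if and only if `φ` is a
`*`-semigroup homomorphism satisfying `φ(i·1) = i·φ(e₁₁) + i·φ(e₂₂)`. -/
theorem stmt_4 {A B : Type*} [CStarAlgebra A] [NonUnitalCStarAlgebra B]
    (φ : Matrix (Fin 2) (Fin 2) A → B) :
    ((∀ x y, φ (x + y) = φ x + φ y) ∧ (∀ (c : ℂ) (x), φ (c • x) = c • φ x) ∧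
        (∀ x y, φ (x * y) = φ x * φ y) ∧ (∀ x, φ (star x) = star (φ x))) ↔
      ((∀ x y, φ (x * y) = φ x * φ y) ∧ (∀ x, φ (star x) = star (φ x)) ∧
        φ (Complex.I • (1 : Matrix (Fin 2) (Fin 2) A)) =
          Complex.I • φ (Matrix.single 0 0 (1 : A)) +
          Complex.I • φ (Matrix.single 1 1 (1 : A))) := by
  constructor
  · rintro ⟨hadd, hsmul, hm, hs⟩
    refine ⟨hm, hs, ?_⟩
    rw [hsmul, Stmt4Aux.one_eq, hadd, smul_add]
  · rintro ⟨hm, hs, hI⟩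
    obtain ⟨hadd, hsmul⟩ := Stmt4Aux.backward φ hm hs hI
    exact ⟨hadd, hsmul, hm, hs⟩
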